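/- Let λ₁, λ₂ : ℝ → ℂ be continuous functions satisfying λ₁(t+1) = λ₂(t) and λ₂(t+1) = λ₁(t) for all t, with λ₁(t) ≠ λ₂(t) for all t. Then there is no continuous labeling μ₁, μ₂ : ℝ → ℂ of the same pairs of values (i.e. {μ₁(t), μ₂(t)} = {λ₁(t), λ₂(t)} for all t, with μ₁, μ₂ continuous) such that μ₁ and μ₂ are 1-periodic. -/
import Mathlib


theorem stmt_0 (l1 l2 : ℝ → ℂ) (h1 : Continuous l1) (h2 : Continuous l2)
    (hne : ∀ t, l1 t ≠ l2 t)
    (hsw1 : ∀ t, l1 (t + 1) = l2 t) (hsw2 : ∀ t, l2 (t + 1) = l1 t) :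
    ¬ ∃ m1 m2 : ℝ → ℂ, Continuous m1 ∧ Continuous m2 ∧
      (∀ t, ({m1 t, m2 t} : Set ℂ) = {l1 t, l2 t}) ∧
      (∀ t, m1 (t + 1) = m1 t) ∧ (∀ t, m2 (t + 1) = m2 t) := by
  rintro ⟨m1, m2, hm1, hm2, hset, hp1, hp2⟩
  have hmem : ∀ t, m1 t = l1 t ∨ m1 t = l2 t := by
    intro t
    have : m1 t ∈ ({l1 t, l2 t} : Set ℂ) := by
      rw [← hset t]; exact Set.mem_insert _ _
    simpa using this
  have hcompl : {t : ℝ | m1 t = l1 t}ᶜ = {t : ℝ | m1 t = l2 t} := by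
    ext t
    simp only [Set.mem_compl_iff, Set.mem_setOf_eq]
    constructor
    · intro h; rcases hmem t with h' | h' <;> tauto
    · intro h h'; exact hne t (h'.symm.trans h)
  have hclopen : IsClopen {t : ℝ | m1 t = l1 t} := by
    constructor
    · exact isClosed_eq hm1 h1
    · rw [← isClosed_compl_iff, hcompl]
      exact isClosed_eq hm1 h2
  rcases isClopen_iff.mp hclopen with h | h
  · have hall : ∀ t, m1 t = l2 t := by
      intro t
      have : t ∈ {t : ℝ | m1 t = l1 t}ᶜ := by rw [h]; simp
      rwa [hcompl] at this
    have := hall (0 + 1)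
    rw [hp1 0, hsw2 0, hall 0] at this
    exact hne 0 this.symm
  · have hall : ∀ t, m1 t = l1 t := fun t => by
      have : t ∈ {t : ℝ | m1 t = l1 t} := by rw [h]; trivial
      exact this
    have := hall (0 + 1)
    rw [hp1 0, hsw1 0, hall 0] at this
    exact hne 0 this
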